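/- Let G be a graph of maximum degree Δ and ε < 1/5. If x and y are dense vertices in the same connected component of the graph induced by friend edges on dense vertices, then x and y are at distance at most 2 in G (i.e., every such component has weak diameter at most 2). -/

import Mathlib

open Finset

attribute [local instance] Classical.propDecidable

variable {V : Type*}

/-- `uv` is a friend edge: they are adjacent and share at least `(1-ε)Δ` neighbors. -/
def friendAdj [Fintype V] [DecidableEq V] (G : SimpleGraph V) [DecidableRel G.Adj]
    (Δ : ℕ) (ε : ℝ) (u v : V) : Prop :=
  G.Adj u v ∧ (1 - ε) * (Δ : ℝ) ≤ ((G.neighborFinset u ∩ G.neighborFinset v).card : ℝ)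

/-- The friends of `v`. -/
noncomputable def friends [Fintype V] [DecidableEq V] (G : SimpleGraph V) [DecidableRel G.Adj]
    (Δ : ℕ) (ε : ℝ) (v : V) : Finset V :=
  Finset.univ.filter (fun w => friendAdj G Δ ε v w)

/-- `v` is dense: it has at least `(1-ε)Δ` friends. -/
def isDense [Fintype V] [DecidableEq V] (G : SimpleGraph V) [DecidableRel G.Adj]
    (Δ : ℕ) (ε : ℝ) (v : V) : Prop :=
  (1 - ε) * (Δ : ℝ) ≤ ((friends G Δ ε v).card : ℝ)

/-- The graph on dense vertices whose edges are the friend edges; its connected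
components are the almost-cliques. -/
def friendGraph [Fintype V] [DecidableEq V] (G : SimpleGraph V) [DecidableRel G.Adj]
    (Δ : ℕ) (ε : ℝ) : SimpleGraph V where
  Adj u v := friendAdj G Δ ε u v ∧ isDense G Δ ε u ∧ isDense G Δ ε v
  symm := ⟨by
    rintro u v ⟨⟨hadj, hcard⟩, hu, hv⟩
    exact ⟨⟨hadj.symm, by rwa [Finset.inter_comm]⟩, hv, hu⟩⟩
  loopless := ⟨fun v h => G.loopless.irrefl v h.1.1⟩


lemma card_inter_real {V : Type*} [DecidableEq V] (A B C : Finset V) (hA : A ⊆ C) (hB : B ⊆ C) :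
    (A.card : ℝ) + B.card - C.card ≤ ((A ∩ B).card : ℝ) := by
  have h1 := Finset.card_union_add_card_inter A B
  have h2 : (A ∪ B).card ≤ C.card := Finset.card_le_card (Finset.union_subset hA hB)
  have h1' : ((A ∪ B).card : ℝ) + ((A ∩ B).card : ℝ) = (A.card : ℝ) + B.card := by
    exact_mod_cast h1
  have h2' : ((A ∪ B).card : ℝ) ≤ (C.card : ℝ) := by exact_mod_cast h2
  linarith

lemma friends_subset [Fintype V] [DecidableEq V] (G : SimpleGraph V) [DecidableRel G.Adj]
    (Δ : ℕ) (ε : ℝ) (v : V) : friends G Δ ε v ⊆ G.neighborFinset v := by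
  intro w hw
  simp only [friends, Finset.mem_filter] at hw
  rw [SimpleGraph.mem_neighborFinset]
  exact hw.2.1

lemma sdiff_friends_card [Fintype V] [DecidableEq V] (G : SimpleGraph V) [DecidableRel G.Adj]
    (Δ : ℕ) (ε : ℝ) (hΔ : ∀ w, G.degree w ≤ Δ) (v : V) (hv : isDense G Δ ε v)
    (S : Finset V) (hS : S ⊆ G.neighborFinset v) :
    ((S \ friends G Δ ε v).card : ℝ) ≤ ε * Δ := by
  have hsub : S \ friends G Δ ε v ⊆ G.neighborFinset v \ friends G Δ ε v :=
    Finset.sdiff_subset_sdiff hS (le_refl _)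
  have h1 : (G.neighborFinset v \ friends G Δ ε v).card
      = (G.neighborFinset v).card - (friends G Δ ε v).card :=
    Finset.card_sdiff_of_subset (friends_subset G Δ ε v)
  have hle : (friends G Δ ε v).card ≤ (G.neighborFinset v).card :=
    Finset.card_le_card (friends_subset G Δ ε v)
  have h2 : ((G.neighborFinset v \ friends G Δ ε v).card : ℝ)
      = ((G.neighborFinset v).card : ℝ) - (friends G Δ ε v).card := by
    rw [h1, Nat.cast_sub hle]
  have hdeg : ((G.neighborFinset v).card : ℝ) ≤ Δ := by
    rw [SimpleGraph.card_neighborFinset_eq_degree]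
    exact_mod_cast hΔ v
  have hmono : ((S \ friends G Δ ε v).card : ℝ)
      ≤ ((G.neighborFinset v \ friends G Δ ε v).card : ℝ) := by
    exact_mod_cast Finset.card_le_card hsub
  have := hv
  unfold isDense at this
  linarith

lemma boost [Fintype V] [DecidableEq V] (G : SimpleGraph V) [DecidableRel G.Adj]
    (Δ : ℕ) (ε : ℝ) (hΔ : ∀ w, G.degree w ≤ Δ)
    (x w : V) (hx : isDense G Δ ε x) (hw : isDense G Δ ε w)
    (hS : 2 * ε * Δ < ((G.neighborFinset x ∩ G.neighborFinset w).card : ℝ)) :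
    (1 - 2 * ε) * Δ ≤ ((G.neighborFinset x ∩ G.neighborFinset w).card : ℝ) := by
  set S := G.neighborFinset x ∩ G.neighborFinset w with hSdef
  have hSx : S ⊆ G.neighborFinset x := Finset.inter_subset_left
  have hSw : S ⊆ G.neighborFinset w := Finset.inter_subset_right
  have hdx := sdiff_friends_card G Δ ε hΔ x hx S hSx
  have hdw := sdiff_friends_card G Δ ε hΔ w hw S hSw
  -- T = common friend candidates
  set T := (S ∩ friends G Δ ε x) ∩ friends G Δ ε w with hTdef
  have hsplit1 : (S ∩ friends G Δ ε x).card + (S \ friends G Δ ε x).card = S.card :=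
    Finset.card_inter_add_card_sdiff S (friends G Δ ε x)
  have hsplit2 : T.card + ((S ∩ friends G Δ ε x) \ friends G Δ ε w).card
      = (S ∩ friends G Δ ε x).card :=
    Finset.card_inter_add_card_sdiff (S ∩ friends G Δ ε x) (friends G Δ ε w)
  have hsub2 : (S ∩ friends G Δ ε x) \ friends G Δ ε w ⊆ S \ friends G Δ ε w :=
    Finset.sdiff_subset_sdiff Finset.inter_subset_left (le_refl _)
  have hsub2' : ((S ∩ friends G Δ ε x) \ friends G Δ ε w).card ≤ (S \ friends G Δ ε w).card :=
    Finset.card_le_card hsub2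
  have hTpos : 0 < (T.card : ℝ) := by
    have e1 : ((S ∩ friends G Δ ε x).card : ℝ) + ((S \ friends G Δ ε x).card : ℝ)
        = (S.card : ℝ) := by exact_mod_cast hsplit1
    have e2 : ((T.card : ℝ)) + (((S ∩ friends G Δ ε x) \ friends G Δ ε w).card : ℝ)
        = ((S ∩ friends G Δ ε x).card : ℝ) := by exact_mod_cast hsplit2
    have e3 : (((S ∩ friends G Δ ε x) \ friends G Δ ε w).card : ℝ)
        ≤ ((S \ friends G Δ ε w).card : ℝ) := by exact_mod_cast hsub2'
    linarith
  have hTne : T.Nonempty := by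
    rw [← Finset.card_pos]
    exact_mod_cast hTpos
  obtain ⟨f, hf⟩ := hTne
  have hfx : f ∈ friends G Δ ε x := (Finset.mem_inter.mp (Finset.mem_inter.mp hf).1).2
  have hfw : f ∈ friends G Δ ε w := (Finset.mem_inter.mp hf).2
  simp only [friends, Finset.mem_filter] at hfx hfw
  have hx' : (1 - ε) * Δ ≤ ((G.neighborFinset x ∩ G.neighborFinset f).card : ℝ) := hfx.2.2
  have hw' : (1 - ε) * Δ ≤ ((G.neighborFinset w ∩ G.neighborFinset f).card : ℝ) := hfw.2.2
  have hkey := card_inter_real (G.neighborFinset x ∩ G.neighborFinset f)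
    (G.neighborFinset w ∩ G.neighborFinset f) (G.neighborFinset f)
    Finset.inter_subset_right Finset.inter_subset_right
  have hdegf : ((G.neighborFinset f).card : ℝ) ≤ Δ := by
    rw [SimpleGraph.card_neighborFinset_eq_degree]
    exact_mod_cast hΔ f
  have hmono : (((G.neighborFinset x ∩ G.neighborFinset f)
      ∩ (G.neighborFinset w ∩ G.neighborFinset f)).card : ℝ) ≤ (S.card : ℝ) := by
    have : (G.neighborFinset x ∩ G.neighborFinset f)
        ∩ (G.neighborFinset w ∩ G.neighborFinset f) ⊆ S := by
      intro a ha
      rw [hSdef, Finset.mem_inter]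
      simp only [Finset.mem_inter] at ha
      exact ⟨ha.1.1, ha.2.1⟩
    exact_mod_cast Finset.card_le_card this
  linarith

lemma invariant [Fintype V] [DecidableEq V] (G : SimpleGraph V) [DecidableRel G.Adj]
    (Δ : ℕ) (ε : ℝ) (hΔ : ∀ w, G.degree w ≤ Δ) (hε0 : 0 < ε) (hε : ε < 1/5)
    (hΔpos : 0 < (Δ : ℝ)) :
    ∀ {v x : V}, (friendGraph G Δ ε).Walk v x → isDense G Δ ε x →
      (1 - 2 * ε) * Δ ≤ ((G.neighborFinset x ∩ G.neighborFinset v).card : ℝ) := by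
  intro v x p
  induction p with
  | nil =>
    rename_i u
    intro hu
    rw [Finset.inter_self]
    have h1 : ((friends G Δ ε u).card : ℝ) ≤ ((G.neighborFinset u).card : ℝ) := by
      exact_mod_cast Finset.card_le_card (friends_subset G Δ ε u)
    unfold isDense at hu
    nlinarith
  | cons h p ih =>
    rename_i u b c
    intro hc
    have ihc := ih hc
    obtain ⟨⟨hadj, hcard⟩, hdu, hdb⟩ := h
    have hcard' : (1 - ε) * Δ ≤ ((G.neighborFinset b ∩ G.neighborFinset u).card : ℝ) := by
      rwa [Finset.inter_comm]
    have hkey := card_inter_real (G.neighborFinset c ∩ G.neighborFinset b)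
      (G.neighborFinset b ∩ G.neighborFinset u) (G.neighborFinset b)
      Finset.inter_subset_right Finset.inter_subset_left
    have hdegb : ((G.neighborFinset b).card : ℝ) ≤ Δ := by
      rw [SimpleGraph.card_neighborFinset_eq_degree]
      exact_mod_cast hΔ b
    have hmono : (((G.neighborFinset c ∩ G.neighborFinset b)
        ∩ (G.neighborFinset b ∩ G.neighborFinset u)).card : ℝ)
        ≤ ((G.neighborFinset c ∩ G.neighborFinset u).card : ℝ) := by
      have hsub : (G.neighborFinset c ∩ G.neighborFinset b)
          ∩ (G.neighborFinset b ∩ G.neighborFinset u)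
          ⊆ G.neighborFinset c ∩ G.neighborFinset u := by
        intro a ha
        simp only [Finset.mem_inter] at ha ⊢
        exact ⟨ha.1.1, ha.2.2⟩
      exact_mod_cast Finset.card_le_card hsub
    have hbig : 2 * ε * Δ < ((G.neighborFinset c ∩ G.neighborFinset u).card : ℝ) := by
      nlinarith
    exact boost G Δ ε hΔ c u hc hdu hbig

/-- If `x` and `y` are dense vertices in the same connected component of the graph of
friend edges on dense vertices, then `x` and `y` are at distance at most 2 in `G`
(every almost-clique has weak diameter at most 2). -/
theorem stmt_1 [Fintype V] [DecidableEq V] (G : SimpleGraph V) [DecidableRel G.Adj]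
    (Δ : ℕ) (ε : ℝ) (hΔ : ∀ w, G.degree w ≤ Δ) (hε0 : 0 < ε) (hε : ε < 1/5)
    (x y : V) (hx : isDense G Δ ε x) (hy : isDense G Δ ε y)
    (hreach : (friendGraph G Δ ε).Reachable x y) :
    G.dist x y ≤ 2 := by
  by_cases hΔ0 : Δ = 0
  · subst hΔ0
    obtain ⟨p⟩ := hreach
    cases p with
    | nil => simp [SimpleGraph.dist_self]
    | @cons _ b _ h p =>
      exfalso
      have hadj : G.Adj x b := h.1.1
      have hdpos : 0 < G.degree x := by
        rw [← SimpleGraph.card_neighborFinset_eq_degree]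
        refine Finset.card_pos.mpr ⟨b, ?_⟩
        rw [SimpleGraph.mem_neighborFinset]
        exact hadj
      have := hΔ x
      omega
  · have hΔpos : 0 < (Δ : ℝ) := by
      exact_mod_cast Nat.pos_of_ne_zero hΔ0
    obtain ⟨p⟩ := hreach.symm
    have hinv := invariant G Δ ε hΔ hε0 hε hΔpos p hx
    have hpos : 0 < ((G.neighborFinset x ∩ G.neighborFinset y).card : ℝ) := by
      nlinarith
    have hne : (G.neighborFinset x ∩ G.neighborFinset y).Nonempty := by
      rw [← Finset.card_pos]
      exact_mod_cast hpos
    obtain ⟨s, hs⟩ := hne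
    have hxs : G.Adj x s := by
      have h := (Finset.mem_inter.mp hs).1
      rwa [SimpleGraph.mem_neighborFinset] at h
    have hys : G.Adj y s := by
      have h := (Finset.mem_inter.mp hs).2
      rwa [SimpleGraph.mem_neighborFinset] at h
    have hd := SimpleGraph.dist_le
      (SimpleGraph.Walk.cons hxs (SimpleGraph.Walk.cons hys.symm SimpleGraph.Walk.nil))
    simpa using hd
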